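/- Let 𝒢 be a geometry of the form 𝒢 = 𝒢₁ ⊕ 𝒢₂ (the direct sum, where every element of 𝒢₁ is incident to every element of 𝒢₂), where 𝒢₁ is connected of rank at least two and 𝒢₂ is non-empty. Then 𝒢 is simply connected, i.e., the fundamental group of its flag complex is trivial. -/

import Mathlib

/-- A pregeometry over a type set `I`. -/
structure Pregeometry (I X : Type*) where
  typ : X → I
  inc : X → X → Prop
  inc_refl : ∀ x, inc x x
  inc_symm : ∀ x y, inc x y → inc y x
  eq_of_inc_typ : ∀ x y, inc x y → typ x = typ y → x = y

namespace Pregeometry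

variable {I X : Type*} (P : Pregeometry I X)

/-- A flag is a set of pairwise incident elements. -/
def IsFlag (F : Set X) : Prop := ∀ x ∈ F, ∀ y ∈ F, P.inc x y

/-- `P` is a geometry: the type function restricts to a bijection from every
maximal flag onto the type set. -/
def IsGeometry : Prop :=
  ∀ F : Set X, P.IsFlag F → (∀ F' : Set X, P.IsFlag F' → F ⊆ F' → F' = F) →
    Set.BijOn P.typ F Set.univ

end Pregeometry

/-- Edge-path homotopy in the flag complex of a geometry (equivalently, in the
clique complex of the incidence graph): the equivalence relation on paths
generated by insertion/deletion of repetitions `x,x`, returns `x,y,x`, and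
triangles `x,y,z,x` with `x,y,z` pairwise incident (forming a simplex). -/
inductive Homotopic {V : Type*} (adj : V → V → Prop) : List V → List V → Prop
  | refl (p : List V) : Homotopic adj p p
  | symm {p q : List V} : Homotopic adj p q → Homotopic adj q p
  | trans {p q r : List V} : Homotopic adj p q → Homotopic adj q r → Homotopic adj p r
  | rep (X Y : List V) (x : V) : Homotopic adj (X ++ x :: Y) (X ++ x :: x :: Y)
  | ret (X Y : List V) (x y : V) : adj x y →
      Homotopic adj (X ++ x :: Y) (X ++ x :: y :: x :: Y)
  | tri (X Y : List V) (x y z : V) : adj x y → adj y z → adj z x →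
      Homotopic adj (X ++ x :: Y) (X ++ x :: y :: z :: x :: Y)

namespace Homotopic

variable {V : Type*} {adj : V → V → Prop}

/-- Homotopy is preserved by prepending a vertex. -/
theorem cons (a : V) {p q : List V} (h : Homotopic adj p q) :
    Homotopic adj (a :: p) (a :: q) := by
  induction h with
  | refl p => exact .refl _
  | symm _ ih => exact .symm ih
  | trans _ _ ih₁ ih₂ => exact .trans ih₁ ih₂
  | rep X Y x => exact Homotopic.rep (a :: X) Y x
  | ret X Y x y hxy => exact Homotopic.ret (a :: X) Y x y hxy
  | tri X Y x y z h1 h2 h3 => exact Homotopic.tri (a :: X) Y x y z h1 h2 h3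

/-- Subdivision of an edge `x,y` through a common neighbour `m`. -/
theorem sub (hs : ∀ x y, adj x y → adj y x) (X Y : List V) (x m y : V)
    (hxm : adj x m) (hmy : adj m y) (hxy : adj x y) :
    Homotopic adj (X ++ x :: y :: Y) (X ++ x :: m :: y :: Y) := by
  have h1 : Homotopic adj (X ++ x :: (y :: Y)) (X ++ x :: m :: y :: x :: (y :: Y)) :=
    Homotopic.tri X (y :: Y) x m y hxm hmy (hs _ _ hxy)
  have h2 : Homotopic adj ((X ++ [x, m]) ++ y :: Y) ((X ++ [x, m]) ++ y :: x :: y :: Y) :=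
    Homotopic.ret (X ++ [x, m]) Y y x (hs _ _ hxy)
  simp only [List.append_assoc, List.cons_append, List.nil_append] at h1 h2 ⊢
  exact h1.trans h2.symm

/-- Coning: a vertex `v` adjacent to `u`, `w` and to everything on a path `R`
from `u` to `w` may be replaced by that path. -/
theorem cone (hs : ∀ x y, adj x y → adj y x) (R : List V) :
    ∀ (X : List V) (u v w : V) (Y : List V),
      adj u v → adj v w → (∀ z ∈ R, adj v z) → List.Chain' adj (u :: (R ++ [w])) →
      Homotopic adj (X ++ u :: v :: w :: Y) (X ++ u :: (R ++ w :: Y)) := by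
  induction R with
  | nil =>
    intro X u v w Y huv hvw _ hch
    have huw : adj u w := (List.isChain_cons_cons.mp hch).1
    simpa using (sub hs X Y u v w huv hvw huw).symm
  | cons a R ih =>
    intro X u v w Y huv hvw hR hch
    have hch' := List.isChain_cons_cons.mp hch
    have hua : adj u a := hch'.1
    have hav : adj a v := hs _ _ (hR a (by simp))
    have h1 : Homotopic adj (X ++ u :: v :: w :: Y) (X ++ u :: a :: v :: w :: Y) :=
      sub hs X (w :: Y) u a v hua hav huv
    have h2 := ih (X ++ [u]) a v w Y hav hvw (fun z hz => hR z (by simp [hz])) hch'.2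
    simp only [List.append_assoc, List.cons_append, List.nil_append] at h1 h2 ⊢
    exact h1.trans h2

/-- Collapsing: a path all of whose vertices are adjacent to its first vertex `h`
may be collapsed to the single edge from `h` to the endpoint. -/
theorem collapse (hs : ∀ x y, adj x y → adj y x) (L : List V) :
    ∀ (X : List V) (h z : V), (∀ w ∈ L, adj h w) → adj h z →
      List.Chain' adj (h :: (L ++ [z])) →
      Homotopic adj (X ++ h :: (L ++ [z])) (X ++ [h, z]) := by
  induction L with
  | nil => intro X h z _ _ _; exact .refl _
  | cons a L ih =>
    intro X h z hL hz hch
    obtain ⟨nx, Y, hny⟩ : ∃ nx Y, L ++ [z] = nx :: Y := by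
      cases L <;> exact ⟨_, _, rfl⟩
    have hha : adj h a := hL a (by simp)
    have hch2 : List.Chain' adj (a :: (L ++ [z])) := (List.isChain_cons_cons.mp hch).2
    have han : adj a nx := by
      rw [hny] at hch2; exact (List.isChain_cons_cons.mp hch2).1
    have hnmem : nx ∈ L ++ [z] := by rw [hny]; exact List.mem_cons_self
    have hhn : adj h nx := by
      rcases List.mem_append.mp hnmem with h' | h'
      · exact hL nx (by simp [h'])
      · rw [List.mem_singleton.mp h']; exact hz
    have hdel : Homotopic adj (X ++ h :: a :: nx :: Y) (X ++ h :: nx :: Y) :=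
      (sub hs X Y h a nx hha han hhn).symm
    have hch3 : List.Chain' adj (h :: (L ++ [z])) := by
      rw [hny]
      exact List.isChain_cons_cons.mpr ⟨hhn, by rw [hny] at hch2; exact (List.isChain_cons_cons.mp hch2).2⟩
    have h2 := ih X h z (fun w hw => hL w (by simp [hw])) hz hch3
    rw [hny] at h2
    have hgoal : X ++ h :: (a :: L ++ [z]) = X ++ h :: a :: nx :: Y := by
      simp [hny]
    rw [hgoal]
    exact hdel.trans h2

/-- A loop all of whose interior vertices are adjacent to a common hub `hb`
(adjacent also to the base point) is null-homotopic. -/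
theorem loop (hs : ∀ x y, adj x y → adj y x) (x₀ hb : V) (hhx : adj hb x₀) :
    ∀ (L : List V), (∀ z ∈ L, adj hb z) → List.Chain' adj (x₀ :: (L ++ [x₀])) →
      Homotopic adj (x₀ :: (L ++ [x₀])) [x₀]
  | [], _, _ => by simpa using (Homotopic.rep [] [] x₀).symm
  | [w], hL, hch => by
    have h1 : adj x₀ w := (List.isChain_cons_cons.mp hch).1
    simpa using (Homotopic.ret [] [] x₀ w h1).symm
  | w₁ :: w₂ :: L₃, hL, hch => by
    have h01 : adj x₀ w₁ := (List.isChain_cons_cons.mp hch).1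
    have hch1 : List.Chain' adj (w₁ :: (w₂ :: L₃ ++ [x₀])) := (List.isChain_cons_cons.mp hch).2
    have h12 : adj w₁ w₂ := (List.isChain_cons_cons.mp hch1).1
    have hch2 : List.Chain' adj (w₂ :: (L₃ ++ [x₀])) := by
      simpa [List.Chain'] using (List.isChain_cons_cons.mp hch1).2
    have hcone := cone hs [hb] [] x₀ w₁ w₂ (L₃ ++ [x₀]) h01 h12
      (fun z hz => by rw [List.mem_singleton.mp hz]; exact hs _ _ (hL w₁ (by simp)))
      (by
        refine List.isChain_cons_cons.mpr ⟨hs _ _ hhx, List.isChain_cons_cons.mpr ⟨hL w₂ (by simp), ?_⟩⟩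
        simp)
    have hcoll := collapse hs (w₂ :: L₃) [x₀] hb x₀
      (fun w hw => hL w (by simp [List.mem_cons.mp hw])) hhx
      (List.isChain_cons_cons.mpr ⟨hL w₂ (by simp), hch2⟩)
    have hret : Homotopic adj [x₀, hb, x₀] [x₀] :=
      (Homotopic.ret [] [] x₀ hb (hs _ _ hhx)).symm
    simp only [List.append_assoc, List.cons_append, List.nil_append] at hcone hcoll ⊢
    exact (hcone.trans hcoll).trans hret

end Homotopic

/-- Let `𝒢` be a geometry of the form `𝒢₁ ⊕ 𝒢₂` (elements whose type lies in `J`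
versus the rest, any element of the one part incident to any element of the other),
where `𝒢₁` is connected of rank at least two and `𝒢₂` is non-empty.  Then `𝒢` is
simply connected: it is connected, and every cycle of its flag complex based at a
point is null-homotopic. -/
theorem stmt_3 {I X : Type*} (P : Pregeometry I X) (hgeo : P.IsGeometry)
    (J : Set I)
    (hcross : ∀ x y : X, P.typ x ∈ J → P.typ y ∉ J → P.inc x y)
    (hrank : ∃ a b : I, a ∈ J ∧ b ∈ J ∧ a ≠ b)
    (hconn₁ : (∃ x : X, P.typ x ∈ J) ∧ ∀ x y : X, P.typ x ∈ J → P.typ y ∈ J →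
      Relation.ReflTransGen (fun a b => P.inc a b ∧ P.typ a ∈ J ∧ P.typ b ∈ J) x y)
    (hne₂ : ∃ y : X, P.typ y ∉ J) :
    (∀ x y : X, Relation.ReflTransGen P.inc x y) ∧
    (∀ (x₀ : X) (p : List X), p.Chain' P.inc → p.head? = some x₀ →
      p.getLast? = some x₀ → Homotopic P.inc p [x₀]) := by
  classical
  obtain ⟨c, hc⟩ := hne₂
  obtain ⟨⟨m0, hm0⟩, hpath⟩ := hconn₁
  have hs : ∀ x y : X, P.inc x y → P.inc y x := P.inc_symm
  -- elements reached by a `J`-chain have type in `J`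
  have good : ∀ (l : List X) (u : X),
      List.Chain (fun a b => P.inc a b ∧ P.typ a ∈ J ∧ P.typ b ∈ J) u l →
      ∀ z ∈ l, P.typ z ∈ J := by
    intro l
    induction l with
    | nil => simp
    | cons a l ih =>
      intro u hl z hz
      rcases List.chain_cons.mp hl with ⟨hua, hl'⟩
      rcases List.mem_cons.mp hz with rfl | hz
      · exact hua.2.2
      · exact ih a hl' z hz
  -- every element is joined to `m0` by a chain whose interior lies in `𝒢₁`
  have reach : ∀ u : X, ∃ l : List X, List.Chain' P.inc (u :: l) ∧
      (u :: l).getLast? = some m0 ∧ ∀ z ∈ l, P.typ z ∈ J := by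
    intro u
    by_cases hu : P.typ u ∈ J
    · obtain ⟨l, hl, hlast⟩ := List.exists_isChain_cons_of_relationReflTransGen (hpath u m0 hu hm0)
      refine ⟨l, ?_, ?_, good l u hl⟩
      · exact hl.imp fun a b hab => hab.1
      · rw [List.getLast?_eq_getLast_of_ne_nil (List.cons_ne_nil _ _), hlast]
    · refine ⟨[m0], ?_, rfl, by simpa using hm0⟩
      exact List.isChain_cons_cons.mpr ⟨hs _ _ (hcross m0 u hm0 hu), List.isChain_singleton _⟩
  have conn1 : ∀ u : X, Relation.ReflTransGen P.inc u m0 := by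
    intro u
    by_cases hu : P.typ u ∈ J
    · exact Relation.ReflTransGen.mono (r := fun a b => P.inc a b ∧ P.typ a ∈ J ∧ P.typ b ∈ J) (p := P.inc) (fun a b hab => hab.1) u m0 (hpath u m0 hu hm0)
    · exact Relation.ReflTransGen.single (hs _ _ (hcross m0 u hm0 hu))
  have hsymR : Symmetric (Relation.ReflTransGen P.inc) :=
    fun x y h => (@Relation.ReflTransGen.symmetric _ _ ⟨fun a b h => hs a b h⟩).symm x y h
  refine ⟨fun x y => (conn1 x).trans (hsymR (conn1 y)), ?_⟩
  -- Stage A: homotope any chain so that all interior vertices lie in `𝒢₁`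
  have stageA : ∀ (L : List X) (u e : X), List.Chain' P.inc (u :: (L ++ [e])) →
      ∃ L', (∀ z ∈ L', P.typ z ∈ J) ∧ List.Chain' P.inc (u :: (L' ++ [e])) ∧
        Homotopic P.inc (u :: (L ++ [e])) (u :: (L' ++ [e])) := by
    intro L
    induction L with
    | nil => intro u e h; exact ⟨[], by simp, h, .refl _⟩
    | cons v L₂ ih =>
      intro u e hch
      have huv : P.inc u v := (List.isChain_cons_cons.mp hch).1
      have hch₂ : List.Chain' P.inc (v :: (L₂ ++ [e])) := by
        simpa [List.Chain'] using (List.isChain_cons_cons.mp hch).2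
      obtain ⟨L₂', hgood₂, hch₂', H₂⟩ := ih v e hch₂
      have Hc : Homotopic P.inc (u :: v :: (L₂ ++ [e])) (u :: v :: (L₂' ++ [e])) := H₂.cons u
      by_cases hv : P.typ v ∈ J
      · refine ⟨v :: L₂', ?_, ?_, by simpa using Hc⟩
        · intro z hz
          rcases List.mem_cons.mp hz with rfl | hz
          · exact hv
          · exact hgood₂ z hz
        · simpa [List.Chain'] using List.isChain_cons_cons.mpr ⟨huv, hch₂'⟩
      · -- eliminate `v`
        obtain ⟨w, Y, hwY⟩ : ∃ w Y, L₂' ++ [e] = w :: Y := by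
          cases L₂' <;> exact ⟨_, _, rfl⟩
        have hvw : P.inc v w := by
          rw [hwY] at hch₂'; exact (List.isChain_cons_cons.mp hch₂').1
        obtain ⟨lu, hlu, hlulast, hlugood⟩ := reach u
        obtain ⟨lw, hlw, hlwlast, hlwgood⟩ := reach w
        set R : List X := lu ++ lw.reverse with hR
        have hgoodR : ∀ z ∈ R, P.typ z ∈ J := by
          intro z hz
          rcases List.mem_append.mp hz with h' | h'
          · exact hlugood z h'
          · exact hlwgood z (List.mem_reverse.mp h')
        have hsplit : u :: (R ++ [w]) = (u :: lu) ++ (w :: lw).reverse := by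
          simp [hR]
        have hchR : List.Chain' P.inc (u :: (R ++ [w])) := by
          rw [hsplit, List.Chain', List.isChain_append]
          refine ⟨hlu, ?_, ?_⟩
          · exact List.isChain_reverse.mpr (hlw.imp fun a b hab => hs a b hab)
          · intro a ha b hb
            rw [hlulast] at ha
            rw [List.head?_reverse, hlwlast] at hb
            obtain rfl : m0 = a := by simpa using ha
            obtain rfl : m0 = b := by simpa using hb
            exact P.inc_refl m0
        have hadjR : ∀ z ∈ R, P.inc v z := fun z hz => hs _ _ (hcross z v (hgoodR z hz) hv)
        have hcone := Homotopic.cone hs R [] u v w Y huv hvw hadjR hchR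
        refine ⟨R ++ L₂', ?_, ?_, ?_⟩
        · intro z hz
          rcases List.mem_append.mp hz with h' | h'
          · exact hgoodR z h'
          · exact hgood₂ z h'
        · have hchtail : List.Chain' P.inc (w :: Y) := by
            rw [hwY] at hch₂'; exact (List.isChain_cons_cons.mp hch₂').2
          have : u :: ((R ++ L₂') ++ [e]) = (u :: R) ++ (w :: Y) := by
            simp [← hwY]
          rw [this, List.Chain', List.isChain_append]
          have hchuR : List.Chain' P.inc ((u :: R) ++ [w]) := by simpa using hchR
          rw [List.Chain', List.isChain_append] at hchuR
          refine ⟨hchuR.1, hchtail, ?_⟩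
          intro a ha b hb
          exact hchuR.2.2 a ha b (by simpa using hb)
        · have heq1 : u :: v :: (L₂' ++ [e]) = [] ++ u :: v :: w :: Y := by simp [hwY]
          have heq2 : u :: ((R ++ L₂') ++ [e]) = [] ++ u :: (R ++ w :: Y) := by
            simp [← hwY]
          rw [heq2]
          exact (by simpa using Hc : Homotopic P.inc (u :: v :: (L₂ ++ [e]))
            (u :: v :: (L₂' ++ [e]))).trans (heq1 ▸ hcone)
  -- main argument
  intro x₀ p hch hhead hlast
  cases p with
  | nil => simp at hhead
  | cons a q =>
    obtain rfl : x₀ = a := (by simpa using hhead : a = x₀).symm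
    cases q with
    | nil => exact .refl _
    | cons b q' =>
      have hq : (b :: q').getLast? = some x₀ := by
        rw [List.getLast?_cons_cons] at hlast; exact hlast
      obtain ⟨L, hLdef⟩ : ∃ L, b :: q' = L ++ [x₀] :=
        ⟨(b :: q').dropLast, (List.dropLast_append_getLast? _ hq).symm⟩
      rw [hLdef] at hch ⊢
      obtain ⟨L', hgood', hch', H'⟩ := stageA L x₀ x₀ hch
      -- choose the hub
      by_cases hx₀ : P.typ x₀ ∈ J
      · have hhub : P.inc c x₀ := hs _ _ (hcross x₀ c hx₀ hc)
        have hL : ∀ z ∈ L', P.inc c z := fun z hz => hs _ _ (hcross z c (hgood' z hz) hc)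
        exact H'.trans (Homotopic.loop hs x₀ c hhub L' hL hch')
      · have hhub : P.inc x₀ x₀ := P.inc_refl x₀
        have hL : ∀ z ∈ L', P.inc x₀ z := fun z hz => hs _ _ (hcross z x₀ (hgood' z hz) hx₀)
        exact H'.trans (Homotopic.loop hs x₀ x₀ hhub L' hL hch')
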